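/- Let M ≥ 6 be even and let u = 0 < v < w < M with v and w even. Then for every z ∈ F_2^M with Γ(z) ≠ 0, the sum Σ_{j odd, 0 ≤ j < M} z_j is even. -/
import Mathlib


open Finset

/-- The quadratic form on F_2^M associated with the cycle on vertices
{0, ..., M−1} with bits b_u, b_v, b_w at the distinguished vertices
u = 0, v, w: q(x) = 2·Σ_j x_j x_{j+1} + b_u x_u + b_v x_v + b_w x_w in Z_4. -/
def cycleForm (M : ℕ) [NeZero M] (v w : Fin M) (bu bv bw : ZMod 2)
    (x : Fin M → ZMod 2) : ZMod 4 :=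
  2 * ∑ j : Fin M, ((x j).val : ZMod 4) * ((x (j + 1)).val : ZMod 4)
    + (bu.val : ZMod 4) * ((x 0).val : ZMod 4)
    + (bv.val : ZMod 4) * ((x v).val : ZMod 4)
    + (bw.val : ZMod 4) * ((x w).val : ZMod 4)

/-- The Fourier coefficient Γ(z) = Σ_x (−1)^{z^T x} i^{q(x)}. -/
noncomputable def cycleGamma (M : ℕ) [NeZero M] (v w : Fin M)
    (bu bv bw : ZMod 2) (z : Fin M → ZMod 2) : ℂ :=
  ∑ x : Fin M → ZMod 2,
    (-1 : ℂ) ^ (∑ α : Fin M, z α * x α).val *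
      Complex.I ^ (cycleForm M v w bu bv bw x).val

namespace Gamma17Aux

/-- indicator of odd vertices -/
def cbit (M : ℕ) (j : Fin M) : ZMod 2 := if Odd j.val then 1 else 0

lemma zmod2_cases : ∀ a : ZMod 2, a = 0 ∨ a = 1 := by decide

lemma cbit_add_one (M : ℕ) [NeZero M] (hM : Even M) (j : Fin M) :
    cbit M (j + 1) = 1 + cbit M j := by
  have hM2 : 2 ≤ M := by
    rcases hM with ⟨k, hk⟩
    have : M ≠ 0 := NeZero.ne M
    omega
  have hone : (1 : Fin M).val = 1 := by
    rw [Fin.val_one']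
    exact Nat.mod_eq_of_lt (by omega)
  have hval : ((j + 1 : Fin M)).val = (j.val + 1) % M := by
    rw [Fin.val_add, hone]
  have hMe : M % 2 = 0 := Nat.even_iff.mp hM
  have hj : j.val < M := j.isLt
  unfold cbit
  rw [hval]
  rcases Nat.lt_or_ge (j.val + 1) M with h | h
  · rw [Nat.mod_eq_of_lt h]
    rcases Nat.even_or_odd j.val with he | ho
    · have h1 : Odd (j.val + 1) := Even.add_one he
      have h2 : ¬ Odd j.val := by simp [Nat.not_odd_iff_even, he]
      simp [h1, h2]
    · have h1 : ¬ Odd (j.val + 1) := by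
        rw [Nat.not_odd_iff_even]
        exact Odd.add_one ho
      simp [h1, ho]
      decide
  · have hjM : j.val + 1 = M := by omega
    have h0 : (j.val + 1) % M = 0 := by rw [hjM]; exact Nat.mod_self M
    have hjo : Odd j.val := by
      rw [Nat.odd_iff]; omega
    have h1 : ¬ Odd 0 := by simp
    rw [h0]
    simp [h1, hjo]
    decide

lemma cbit_sub_one (M : ℕ) [NeZero M] (hM : Even M) (k : Fin M) :
    cbit M (k - 1) = 1 + cbit M k := by
  have h := cbit_add_one M hM (k - 1)
  rw [sub_add_cancel] at h
  rw [h, ← add_assoc]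
  norm_num
  exact (CharTwo.add_self_eq_zero (1 : ZMod 2))

/-- the additive map a ↦ 2·a.val from Z₂ to Z₄ -/
def f2 : ZMod 2 →+ ZMod 4 where
  toFun a := 2 * (a.val : ZMod 4)
  map_zero' := by decide
  map_add' := by decide

lemma f2_mul (a b : ZMod 2) :
    2 * ((a.val : ZMod 4) * (b.val : ZMod 4)) = f2 (a * b) := by
  revert a b; decide

lemma quad_eq (M : ℕ) [NeZero M] (x : Fin M → ZMod 2) :
    2 * ∑ j : Fin M, ((x j).val : ZMod 4) * ((x (j + 1)).val : ZMod 4)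
      = f2 (∑ j : Fin M, x j * x (j + 1)) := by
  rw [Finset.mul_sum, map_sum]
  exact Finset.sum_congr rfl fun j _ => f2_mul _ _

lemma quad_shift (M : ℕ) [NeZero M] (hM : Even M) (x : Fin M → ZMod 2) :
    ∑ j : Fin M, (x j + cbit M j) * (x (j + 1) + cbit M (j + 1))
      = ∑ j : Fin M, x j * x (j + 1) := by
  have per : ∀ j : Fin M,
      (x j + cbit M j) * (x (j + 1) + cbit M (j + 1))
        = x j * x (j + 1) + (x j + cbit M j * x j + cbit M j * x (j + 1)) := by
    intro j
    rw [cbit_add_one M hM j]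
    rcases zmod2_cases (x j) with h1 | h1 <;>
      rcases zmod2_cases (x (j + 1)) with h2 | h2 <;>
      rcases zmod2_cases (cbit M j) with h3 | h3 <;>
      rw [h1, h2, h3] <;> decide
  rw [Finset.sum_congr rfl fun j _ => per j, Finset.sum_add_distrib,
    Finset.sum_add_distrib, Finset.sum_add_distrib]
  have reindex : ∑ j : Fin M, cbit M j * x (j + 1)
      = ∑ k : Fin M, cbit M (k - 1) * x k := by
    apply Fintype.sum_equiv (Equiv.addRight (1 : Fin M))
    intro j
    simp
  have step : ∑ j : Fin M, cbit M j * x (j + 1)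
      = ∑ j : Fin M, x j + ∑ j : Fin M, cbit M j * x j := by
    rw [reindex, ← Finset.sum_add_distrib]
    apply Finset.sum_congr rfl
    intro k _
    rw [cbit_sub_one M hM k, add_mul, one_mul]
  rw [step]
  have hself := CharTwo.add_self_eq_zero
    ((∑ j : Fin M, x j) + ∑ j : Fin M, cbit M j * x j)
  linear_combination hself

lemma cbit_zero (M : ℕ) [NeZero M] : cbit M 0 = 0 := by
  unfold cbit
  simp

lemma cbit_even (M : ℕ) [NeZero M] (j : Fin M) (h : Even j.val) : cbit M j = 0 := by
  unfold cbit
  simp [Nat.not_odd_iff_even.mpr h]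

lemma form_shift (M : ℕ) [NeZero M] (hM : Even M) (v w : Fin M)
    (hve : Even v.val) (hwe : Even w.val) (bu bv bw : ZMod 2)
    (x : Fin M → ZMod 2) :
    cycleForm M v w bu bv bw (x + cbit M) = cycleForm M v w bu bv bw x := by
  have h0 : (x + cbit M) 0 = x 0 := by
    simp [Pi.add_apply, cbit_zero]
  have hv : (x + cbit M) v = x v := by
    simp [Pi.add_apply, cbit_even M v hve]
  have hw : (x + cbit M) w = x w := by
    simp [Pi.add_apply, cbit_even M w hwe]
  unfold cycleForm
  rw [h0, hv, hw]
  congr 3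
  have heq : ∀ j : Fin M, (x + cbit M) j = x j + cbit M j := fun j => rfl
  calc 2 * ∑ j : Fin M, (((x + cbit M) j).val : ZMod 4) * (((x + cbit M) (j + 1)).val : ZMod 4)
      = f2 (∑ j : Fin M, (x + cbit M) j * (x + cbit M) (j + 1)) := quad_eq M _
    _ = f2 (∑ j : Fin M, (x j + cbit M j) * (x (j + 1) + cbit M (j + 1))) := by
        simp only [heq]
    _ = f2 (∑ j : Fin M, x j * x (j + 1)) := by rw [quad_shift M hM x]
    _ = 2 * ∑ j : Fin M, ((x j).val : ZMod 4) * ((x (j + 1)).val : ZMod 4) :=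
        (quad_eq M x).symm

end Gamma17Aux

/-- Let M ≥ 6 be even and u = 0 < v < w < M with v, w even.
Then for every z with Γ(z) ≠ 0 the sum Σ_{j odd} z_j is even. -/
theorem odd_sum_even_of_Gamma_ne_zero (M : ℕ) [NeZero M]
    (hM6 : 6 ≤ M) (hMeven : Even M) (v w : Fin M)
    (hv0 : 0 < v.val) (hvw : v.val < w.val)
    (hve : Even v.val) (hwe : Even w.val)
    (bu bv bw : ZMod 2) (z : Fin M → ZMod 2)
    (hz : cycleGamma M v w bu bv bw z ≠ 0) :
    Even (∑ j ∈ Finset.univ.filter (fun j : Fin M => Odd j.val), (z j).val) := by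
  classical
  by_contra hodd
  apply hz
  set S := Finset.univ.filter (fun j : Fin M => Odd j.val) with hS
  have hodd' : Odd (∑ j ∈ S, (z j).val) := Nat.not_even_iff_odd.mp hodd
  have ht : (∑ α : Fin M, z α * Gamma17Aux.cbit M α) = 1 := by
    have h1 : ∑ α : Fin M, z α * Gamma17Aux.cbit M α = ∑ j ∈ S, z j := by
      rw [hS, Finset.sum_filter]
      apply Finset.sum_congr rfl
      intro j _
      unfold Gamma17Aux.cbit
      split <;> simp
    have h2 : ((∑ j ∈ S, (z j).val : ℕ) : ZMod 2) = ∑ j ∈ S, z j := by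
      push_cast
      apply Finset.sum_congr rfl
      intro j _
      simp [ZMod.natCast_val, ZMod.cast_id]
    rw [h1, ← h2, ← ZMod.natCast_mod _ 2, Nat.odd_iff.mp hodd', Nat.cast_one]
  have negpow : ∀ s : ZMod 2, ((-1 : ℂ)) ^ ((s + 1).val) = -(-1 : ℂ) ^ s.val := by
    intro s
    rcases Gamma17Aux.zmod2_cases s with h | h <;> subst h <;>
      norm_num [show ZMod.val ((0 : ZMod 2) + 1) = 1 by decide,
        show ZMod.val ((1 : ZMod 2) + 1) = 0 by decide,
        show ZMod.val (2 : ZMod 2) = 0 by decide,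
        show ZMod.val (0 : ZMod 2) = 0 by decide,
        show ZMod.val (1 : ZMod 2) = 1 by decide]
  have hsplit : ∀ x : Fin M → ZMod 2,
      (∑ α : Fin M, z α * (x + Gamma17Aux.cbit M) α)
        = (∑ α : Fin M, z α * x α) + 1 := by
    intro x
    have : ∀ α : Fin M, z α * (x + Gamma17Aux.cbit M) α
        = z α * x α + z α * Gamma17Aux.cbit M α := by
      intro α
      simp [Pi.add_apply, mul_add]
    rw [Finset.sum_congr rfl fun α _ => this α, Finset.sum_add_distrib, ht]
  have key : cycleGamma M v w bu bv bw z = - cycleGamma M v w bu bv bw z := by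
    unfold cycleGamma
    rw [← Finset.sum_neg_distrib]
    apply Fintype.sum_equiv (Equiv.addRight (Gamma17Aux.cbit M))
    intro x
    have he : (Equiv.addRight (Gamma17Aux.cbit M)) x = x + Gamma17Aux.cbit M := rfl
    rw [he, hsplit x, Gamma17Aux.form_shift M hMeven v w hve hwe bu bv bw x,
      negpow]
    ring
  have h2 : (2 : ℂ) * cycleGamma M v w bu bv bw z = 0 := by linear_combination key
  rcases mul_eq_zero.mp h2 with h | h
  · exact absurd h two_ne_zero
  · exact h
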